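/- For every integer n ≥ 2, the twist polynomial of the one-point join K_n ∨ K_n of two disjoint copies of the unlooped complete graph K_n (joined by identifying one vertex from each copy) satisfies T_{K_n ∨ K_n}(z) = 2^{2n−3} · z^{2n−4} · (3z² + 1) in ℤ[z]. -/

import Mathlib

open Matrix Polynomial

/-- The principal submatrix of `M` with rows and columns indexed by the finite set `S`;
by convention the determinant of the empty principal submatrix is `1`, so it is nonsingular. -/
def psub {R V : Type*} (M : Matrix V V R) (S : Finset V) : Matrix ↥S ↥S R :=
  M.submatrix Subtype.val Subtype.val

/-- The width of a set system on a finite ground set, given by the predicate `P` describing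
its feasible sets: the maximum cardinality of a feasible set minus the minimum cardinality. -/
noncomputable def sysWidth {V : Type*} (P : Finset V → Prop) : ℕ :=
  sSup {k | ∃ S, P S ∧ S.card = k} - sInf {k | ∃ S, P S ∧ S.card = k}

/-- The width of the twist `D(M) * A`, where `D(M)` is the delta-matroid of the
symmetric matrix `M` (feasible sets = index sets of nonsingular principal submatrices):
a set `S` is feasible in `D(M) * A` iff `S ∆ A` is feasible in `D(M)`. -/
noncomputable def twistWidth {R V : Type*} [CommRing R] [DecidableEq V]
    (M : Matrix V V R) (A : Finset V) : ℕ :=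
  sysWidth fun S => (psub M (symmDiff S A)).det ≠ 0

/-- The twist polynomial of the looped simple graph with adjacency matrix `M` over `𝔽₂`:
`T_G(z) = Σ_{A ⊆ V(G)} z^{w(D(G)*A)}`. -/
noncomputable def twistPoly {R V : Type*} [CommRing R] [Fintype V] [DecidableEq V]
    (M : Matrix V V R) : Polynomial ℤ :=
  ∑ A : Finset V, (X : Polynomial ℤ) ^ twistWidth M A

/-- The adjacency matrix of the windmill graph `K_n^{(m)}`, obtained from `m` disjoint
copies of the unlooped complete graph `K_n` by identifying one chosen vertex from each
copy into a single common hub vertex (`Sum.inr ()`).  Vertex `Sum.inl (i, a)` is the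
`a`-th non-hub vertex of the `i`-th copy. -/
def windmill (n m : ℕ) :
    Matrix ((Fin m × Fin (n - 1)) ⊕ Unit) ((Fin m × Fin (n - 1)) ⊕ Unit) (ZMod 2) :=
  Matrix.of fun i j =>
    match i, j with
    | Sum.inl a, Sum.inl b => if a.1 = b.1 ∧ a ≠ b then 1 else 0
    | Sum.inl _, Sum.inr _ => 1
    | Sum.inr _, Sum.inl _ => 1
    | Sum.inr _, Sum.inr _ => 0

/-- Corollary 4.9: for every `n ≥ 2`, the one-point join of two copies of the unlooped
complete graph `K_n` (i.e. the windmill graph `K_n^{(2)}`) satisfies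
`T_{K_n ∨ K_n}(z) = 2^{2n−3} · z^{2n−4} · (3z² + 1)`. -/

lemma psub_det_eq_zero_iff {K ι : Type*} [Field K] [Fintype ι] [DecidableEq ι]
    (M : Matrix ι ι K) (S : Finset ι) :
    (psub M S).det = 0 ↔
      ∃ w : ι → K, (∀ i ∉ S, w i = 0) ∧ w ≠ 0 ∧ ∀ i ∈ S, M.mulVec w i = 0 := by
  rw [← Matrix.exists_mulVec_eq_zero_iff]
  constructor
  · rintro ⟨v, hv, hmul⟩
    refine ⟨fun i => if h : i ∈ S then v ⟨i, h⟩ else 0, fun i hi => dif_neg hi, ?_, ?_⟩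
    · intro h
      apply hv
      funext j
      have := congrFun h j.1
      simpa [dif_pos j.2] using this
    · intro i hi
      have h1 : M.mulVec (fun i => if h : i ∈ S then v ⟨i, h⟩ else 0) i
          = ∑ j ∈ S, M i j * (if h : j ∈ S then v ⟨j, h⟩ else 0) := by
        rw [Matrix.mulVec, dotProduct]
        refine (Finset.sum_subset (Finset.subset_univ S) ?_).symm
        intro x _ hx
        simp [dif_neg hx]
      rw [h1, ← Finset.sum_coe_sort]
      have h2 : ∀ j : S, M i j * (if h : (j:ι) ∈ S then v ⟨j, h⟩ else 0)
          = psub M S ⟨i, hi⟩ j * v j := by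
        intro j; rw [dif_pos j.2]; rfl
      rw [Finset.sum_congr rfl (fun j _ => h2 j)]
      exact congrFun hmul ⟨i, hi⟩
  · rintro ⟨w, h0, hne, hmul⟩
    refine ⟨fun j => w j.1, ?_, ?_⟩
    · intro h
      apply hne
      funext i
      by_cases hi : i ∈ S
      · exact congrFun h ⟨i, hi⟩
      · exact h0 i hi
    · funext i
      have h1 : (psub M S).mulVec (fun j => w j.1) i = ∑ j : S, M i.1 j.1 * w j.1 := rfl
      rw [h1, Finset.sum_coe_sort S (fun j => M i.1 j * w j)]
      have h2 : ∑ j ∈ S, M i.1 j * w j = ∑ j, M i.1 j * w j := by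
        refine Finset.sum_subset (Finset.subset_univ S) ?_
        intro x _ hx
        simp [h0 x hx]
      rw [h2]
      exact hmul i.1 i.2

namespace WM
variable {n : ℕ}

abbrev V (n : ℕ) := (Fin 2 × Fin (n - 1)) ⊕ Unit

def hub : V n := Sum.inr ()

def blade (c : Fin 2) (S : Finset (V n)) : Finset (Fin (n - 1)) :=
  Finset.univ.filter fun j => Sum.inl (c, j) ∈ S

lemma mem_blade {c : Fin 2} {j : Fin (n-1)} {S : Finset (V n)} :
    j ∈ blade c S ↔ Sum.inl (c, j) ∈ S := by
  simp [blade]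

lemma blade_symmDiff (c : Fin 2) (S A : Finset (V n)) :
    blade c (symmDiff S A) = symmDiff (blade c S) (blade c A) := by
  ext j
  simp [mem_blade, Finset.mem_symmDiff]

lemma card_eq (S : Finset (V n)) :
    S.card = (blade 0 S).card + (blade 1 S).card + (if hub ∈ S then 1 else 0) := by
  have h : S.card = ∑ v : V n, (if v ∈ S then 1 else 0) := by
    rw [Finset.sum_ite_mem, Finset.univ_inter, Finset.card_eq_sum_ones]
  rw [h, Fintype.sum_sum_type, Fintype.sum_prod_type, Fin.sum_univ_two]
  have hb : ∀ c : Fin 2, (blade c S).card = ∑ j : Fin (n-1), (if Sum.inl (c, j) ∈ S then 1 else 0) := by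
    intro c
    rw [blade, Finset.card_filter]
  rw [hb 0, hb 1]
  by_cases hs : (Sum.inr () : V n) ∈ S
  · simp [hub, hs]
  · simp [hub, hs]

lemma card_blade_le (c : Fin 2) (S : Finset (V n)) : (blade c S).card ≤ n - 1 := by
  simpa using Finset.card_le_univ (blade c S)

lemma card_symmDiff_mod (B C : Finset (Fin (n-1))) :
    (symmDiff B C).card % 2 = (B.card + C.card) % 2 := by
  have h1 : (symmDiff B C).card = (B \ C).card + (C \ B).card := by
    rw [symmDiff_def, Finset.sup_eq_union, Finset.card_union_of_disjoint]
    exact disjoint_sdiff_sdiff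
  have h2 : (B \ C).card + (B ∩ C).card = B.card := Finset.card_sdiff_add_card_inter B C
  have h3 : (C \ B).card + (C ∩ B).card = C.card := Finset.card_sdiff_add_card_inter C B
  have h6 : (B ∩ C).card = (C ∩ B).card := by rw [Finset.inter_comm]
  omega


lemma windmill_inl_inl (c : Fin 2) (a : Fin (n-1)) (p : Fin 2 × Fin (n-1)) :
    windmill n 2 (Sum.inl (c,a)) (Sum.inl p)
      = (if p.1 = c then 1 else 0) + (if p = (c,a) then 1 else 0) := by
  show (if ((c,a).1 = p.1 ∧ (c,a) ≠ p) then (1 : ZMod 2) else 0) = _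
  by_cases h1 : p.1 = c
  · by_cases h2 : p = (c,a)
    · subst h2
      simp only [ne_eq, not_true_eq_false, and_false, if_false, if_pos rfl]
      decide
    · have : (c,a) ≠ p := fun h => h2 h.symm
      simp [h1, h2, this]
  · have h2 : p ≠ (c,a) := fun h => h1 (by rw [h])
    have h3 : ¬ ((c,a).1 = p.1 ∧ (c,a) ≠ p) := by
      rintro ⟨h, -⟩; exact h1 h.symm
    simp [h1, h2, h3]

lemma mulVec_inl (w : V n → ZMod 2) (c : Fin 2) (a : Fin (n-1)) :
    (windmill n 2).mulVec w (Sum.inl (c,a)) =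
      (∑ b, w (Sum.inl (c,b))) + w (Sum.inl (c,a)) + w hub := by
  rw [Matrix.mulVec, dotProduct, Fintype.sum_sum_type]
  have hunit : ∑ x : Unit, windmill n 2 (Sum.inl (c,a)) (Sum.inr x) * w (Sum.inr x)
      = w hub := by
    simp [windmill, hub]
  rw [hunit]
  congr 1
  have : ∀ p : Fin 2 × Fin (n-1),
      windmill n 2 (Sum.inl (c,a)) (Sum.inl p) * w (Sum.inl p)
        = (if p.1 = c then w (Sum.inl p) else 0) + (if p = (c,a) then w (Sum.inl p) else 0) := by
    intro p
    rw [windmill_inl_inl, add_mul, ite_mul, ite_mul, one_mul, zero_mul]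
  rw [Finset.sum_congr rfl (fun p _ => this p), Finset.sum_add_distrib]
  congr 1
  · rw [Fintype.sum_prod_type, Fin.sum_univ_two]
    fin_cases c <;> simp
  · rw [Finset.sum_ite_eq' Finset.univ (c,a) (fun p => w (Sum.inl p))]
    simp

lemma mulVec_inr (w : V n → ZMod 2) :
    (windmill n 2).mulVec w hub =
      (∑ b, w (Sum.inl (0,b))) + (∑ b, w (Sum.inl (1,b))) := by
  rw [hub, Matrix.mulVec, dotProduct, Fintype.sum_sum_type]
  have hunit : ∑ x : Unit, windmill n 2 (Sum.inr ()) (Sum.inr x) * w (Sum.inr x) = 0 := by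
    simp [windmill]
  rw [hunit, add_zero, Fintype.sum_prod_type, Fin.sum_univ_two]
  simp [windmill]

lemma cast2 (m : ℕ) : ((m : ZMod 2)) = if m % 2 = 0 then 0 else 1 := by
  rw [← ZMod.natCast_mod m 2]
  rcases Nat.mod_two_eq_zero_or_one m with h | h <;> simp [h]

lemma sum_indicator (c : Fin 2) (S : Finset (V n)) :
    ∑ b, (if Sum.inl (c,b) ∈ S then (1 : ZMod 2) else 0) = ((blade c S).card : ZMod 2) := by
  rw [blade, Finset.card_filter, Nat.cast_sum]
  exact Finset.sum_congr rfl fun b _ => by by_cases h : Sum.inl (c,b) ∈ S <;> simp [h]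

lemma blade_nonempty_of_odd {c : Fin 2} {S : Finset (V n)}
    (h : (blade c S).card % 2 = 1) : ∃ b, Sum.inl (c, b) ∈ S := by
  have : 0 < (blade c S).card := by omega
  obtain ⟨b, hb⟩ := Finset.card_pos.mp this
  exact ⟨b, mem_blade.mp hb⟩

def feas (S : Finset (V n)) : Prop :=
  if hub ∈ S then (blade 0 S).card % 2 + (blade 1 S).card % 2 = 1
  else (blade 0 S).card % 2 = 0 ∧ (blade 1 S).card % 2 = 0

/-- vanishing-off-S sums restrict to blades -/
lemma sum_blade_eq {S : Finset (V n)} {w : V n → ZMod 2} (h0 : ∀ i ∉ S, w i = 0)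
    (c : Fin 2) : ∑ b, w (Sum.inl (c,b)) = ∑ b ∈ blade c S, w (Sum.inl (c,b)) :=
  (Finset.sum_subset (Finset.subset_univ _) fun b _ hb =>
    h0 _ (fun hmem => hb (mem_blade.mpr hmem))).symm

theorem feas_iff (S : Finset (V n)) : (psub (windmill n 2) S).det ≠ 0 ↔ feas S := by
  rw [Ne, psub_det_eq_zero_iff]
  constructor
  · -- no kernel vector → feasible; contrapositive: ¬ feas → kernel vector
    intro h
    by_contra hfeas
    apply h
    by_cases hhub : hub ∈ S
    · -- ¬ feas with hub: parities equal
      have hp : (blade 0 S).card % 2 = (blade 1 S).card % 2 := by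
        simp only [feas, if_pos hhub] at hfeas
        omega
      refine ⟨fun v => match v with
        | Sum.inl p => if Sum.inl p ∈ S then 1 else 0
        | Sum.inr _ => if (blade 0 S).card % 2 = 0 then 1 else 0, ?_, ?_, ?_⟩
      · rintro (⟨c, b⟩ | ⟨⟩) hi
        · simp [hi]
        · exact absurd hhub hi
      · intro hzero
        rcases Nat.mod_two_eq_zero_or_one (blade 0 S).card with he | ho
        · have := congrFun hzero hub
          simp [hub, he] at this
        · obtain ⟨b, hb⟩ := blade_nonempty_of_odd (c := 0) (S := S) ho
          have := congrFun hzero (Sum.inl (0, b))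
          simp [hb] at this
      · rintro (⟨c, a⟩ | ⟨⟩) hi
        · rw [mulVec_inl]
          show (∑ b, (if Sum.inl (c,b) ∈ S then (1:ZMod 2) else 0))
              + (if Sum.inl (c,a) ∈ S then (1:ZMod 2) else 0)
              + (if (blade 0 S).card % 2 = 0 then (1:ZMod 2) else 0) = 0
          have hcc : (blade c S).card % 2 = (blade 0 S).card % 2 := by
            fin_cases c
            · rfl
            · exact hp.symm
          rw [sum_indicator, cast2, hcc, if_pos hi]
          rcases Nat.mod_two_eq_zero_or_one (blade 0 S).card with he | ho
          · rw [he]; decide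
          · rw [ho]; decide
        · rw [show (Sum.inr () : V n) = hub from rfl, mulVec_inr]
          show (∑ b, (if Sum.inl ((0 : Fin 2),b) ∈ S then (1:ZMod 2) else 0))
              + (∑ b, (if Sum.inl ((1 : Fin 2),b) ∈ S then (1:ZMod 2) else 0)) = 0
          rw [sum_indicator, sum_indicator, cast2, cast2, ← hp]
          rcases Nat.mod_two_eq_zero_or_one (blade 0 S).card with he | ho
          · rw [he]; decide
          · rw [ho]; decide
    · -- ¬ feas without hub: some blade odd
      simp only [feas, if_neg hhub] at hfeas
      have : ∃ c0 : Fin 2, (blade c0 S).card % 2 = 1 := by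
        rcases Nat.mod_two_eq_zero_or_one (blade 0 S).card with h0 | h0
        · rcases Nat.mod_two_eq_zero_or_one (blade 1 S).card with h1 | h1
          · exact absurd ⟨h0, h1⟩ hfeas
          · exact ⟨1, h1⟩
        · exact ⟨0, h0⟩
      obtain ⟨c0, hc0⟩ := this
      refine ⟨fun v => match v with
        | Sum.inl p => if p.1 = c0 ∧ Sum.inl p ∈ S then 1 else 0
        | Sum.inr _ => 0, ?_, ?_, ?_⟩
      · rintro (⟨c, b⟩ | ⟨⟩) hi
        · simp [hi]
        · rfl
      · intro hzero
        obtain ⟨b, hb⟩ := blade_nonempty_of_odd hc0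
        have := congrFun hzero (Sum.inl (c0, b))
        simp [hb] at this
      · rintro (⟨c, a⟩ | ⟨⟩) hi
        · rw [mulVec_inl]
          show (∑ b, (if ((c,b).1 = c0 ∧ Sum.inl (c,b) ∈ S) then (1:ZMod 2) else 0))
              + _ + (0 : ZMod 2) = 0
          by_cases hc : c = c0
          · subst hc
            have : ∀ b : Fin (n-1), (if ((c,b).1 = c ∧ Sum.inl (c,b) ∈ S) then (1:ZMod 2) else 0)
                = if Sum.inl (c,b) ∈ S then 1 else 0 := by intro b; simp
            rw [Finset.sum_congr rfl fun b _ => this b, sum_indicator, cast2, hc0]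
            simp [hi]
            decide
          · have : ∀ b : Fin (n-1), (if ((c,b).1 = c0 ∧ Sum.inl (c,b) ∈ S) then (1:ZMod 2) else 0)
                = 0 := by intro b; simp [hc]
            rw [Finset.sum_congr rfl fun b _ => this b]
            simp [hc]
        · exact absurd hi hhub
  · -- feasible → no kernel vector
    rintro hfeas ⟨w, h0, hne, hrow⟩
    apply hne
    have hrow_inl : ∀ c a, Sum.inl (c,a) ∈ S →
        (∑ b, w (Sum.inl (c,b))) + w (Sum.inl (c,a)) + w hub = 0 := by
      intro c a hi
      rw [← mulVec_inl]; exact hrow _ hi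
    have hval : ∀ c a, Sum.inl (c,a) ∈ S →
        w (Sum.inl (c,a)) = (∑ b, w (Sum.inl (c,b))) + w hub := by
      intro c a hi
      have h := hrow_inl c a hi
      have h2 : (2 : ZMod 2) = 0 := by decide
      linear_combination h - (∑ b, w (Sum.inl (c,b))) * h2 - (w hub) * h2
    have hsum : ∀ c : Fin 2, ∑ b, w (Sum.inl (c,b))
        = ((blade c S).card : ZMod 2) * ((∑ b, w (Sum.inl (c,b))) + w hub) := by
      intro c
      conv_lhs => rw [sum_blade_eq h0 c]
      rw [Finset.sum_congr rfl fun b hb => hval c b (mem_blade.mp hb),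
        Finset.sum_const, nsmul_eq_mul]
    by_cases hhub : hub ∈ S
    · simp only [feas, if_pos hhub] at hfeas
      have hkey : ∀ c d : Fin 2, (blade c S).card % 2 = 1 → (blade d S).card % 2 = 0 →
          w = 0 := by
        intro c d hc hd
        have hwh : w hub = 0 := by
          have h := hsum c
          rw [cast2, if_neg (by omega : ¬ (blade c S).card % 2 = 0), one_mul] at h
          linear_combination -h
        have hsd : ∑ b, w (Sum.inl (d,b)) = 0 := by
          have h := hsum d
          rw [cast2, if_pos hd, zero_mul] at h
          exact h
        have hcd : c ≠ d := by intro h; rw [h, hd] at hc; omega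
        have hhubrow : (∑ b, w (Sum.inl (0,b))) + (∑ b, w (Sum.inl (1,b))) = 0 := by
          rw [← mulVec_inr]; exact hrow _ hhub
        have hsc : ∑ b, w (Sum.inl (c,b)) = 0 := by
          have hor : c = 0 ∧ d = 1 ∨ c = 1 ∧ d = 0 := by
            fin_cases c <;> fin_cases d <;>
              first | exact absurd rfl hcd | exact Or.inl ⟨rfl, rfl⟩ | exact Or.inr ⟨rfl, rfl⟩
          rcases hor with ⟨rfl, rfl⟩ | ⟨rfl, rfl⟩
          · linear_combination hhubrow - hsd
          · linear_combination hhubrow - hsd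
        have hall : ∀ e : Fin 2, ∑ b, w (Sum.inl (e,b)) = 0 := by
          intro e
          have hor : e = c ∨ e = d := by
            fin_cases c <;> fin_cases d <;> fin_cases e <;>
              first | exact absurd rfl hcd | exact Or.inl rfl | exact Or.inr rfl
          rcases hor with rfl | rfl
          · exact hsc
          · exact hsd
        funext v
        rcases v with ⟨e, b⟩ | ⟨⟩
        · by_cases hv : Sum.inl (e, b) ∈ S
          · rw [Pi.zero_apply, hval e b hv, hall e, hwh, add_zero]
          · exact h0 _ hv
        · exact hwh
      rcases Nat.mod_two_eq_zero_or_one (blade 0 S).card with h0' | h0' <;>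
        rcases Nat.mod_two_eq_zero_or_one (blade 1 S).card with h1' | h1'
      · omega
      · exact hkey 1 0 h1' h0'
      · exact hkey 0 1 h0' h1'
      · omega
    · simp only [feas, if_neg hhub] at hfeas
      have hwh : w hub = 0 := h0 _ hhub
      have hall : ∀ e : Fin 2, ∑ b, w (Sum.inl (e,b)) = 0 := by
        intro e
        have he : (blade e S).card % 2 = 0 := by
          fin_cases e
          · exact hfeas.1
          · exact hfeas.2
        have h := hsum e
        rw [cast2, if_pos he, zero_mul] at h
        exact h
      funext v
      rcases v with ⟨e, b⟩ | ⟨⟩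
      · by_cases hv : Sum.inl (e, b) ∈ S
        · rw [Pi.zero_apply, hval e b hv, hall e, hwh, add_zero]
        · exact h0 _ hv
      · exact hwh

def mk (B0 B1 : Finset (Fin (n-1))) (h : Bool) : Finset (V n) :=
  (B0.image fun j => Sum.inl ((0 : Fin 2), j)) ∪ (B1.image fun j => Sum.inl ((1 : Fin 2), j)) ∪
    (if h then {hub} else ∅)

lemma mem_mk_inl {B0 B1 : Finset (Fin (n-1))} {h : Bool} {c : Fin 2} {j : Fin (n-1)} :
    Sum.inl (c, j) ∈ mk B0 B1 h ↔ (c = 0 ∧ j ∈ B0) ∨ (c = 1 ∧ j ∈ B1) := by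
  cases h <;> simp [mk, hub, eq_comm (a := c)] <;> aesop

lemma mem_mk_hub {B0 B1 : Finset (Fin (n-1))} {h : Bool} :
    hub ∈ mk B0 B1 h ↔ h = true := by
  cases h <;> simp [mk, hub]

lemma blade_mk0 (B0 B1 : Finset (Fin (n-1))) (h : Bool) : blade 0 (mk B0 B1 h) = B0 := by
  ext j
  rw [mem_blade, mem_mk_inl]
  simp

lemma blade_mk1 (B0 B1 : Finset (Fin (n-1))) (h : Bool) : blade 1 (mk B0 B1 h) = B1 := by
  ext j
  rw [mem_blade, mem_mk_inl]
  simp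

def statEquiv : Finset (V n) ≃ (Finset (Fin (n-1)) × Finset (Fin (n-1))) × Bool where
  toFun S := ((blade 0 S, blade 1 S), decide (hub ∈ S))
  invFun t := mk t.1.1 t.1.2 t.2
  left_inv S := by
    ext v
    rcases v with ⟨c, j⟩ | ⟨⟩
    · rw [mem_mk_inl]
      constructor
      · rintro (⟨rfl, hj⟩ | ⟨rfl, hj⟩) <;> exact mem_blade.mp hj
      · intro hv
        fin_cases c
        · exact Or.inl ⟨rfl, mem_blade.mpr hv⟩
        · exact Or.inr ⟨rfl, mem_blade.mpr hv⟩
    · rw [show (Sum.inr () : V n) = hub from rfl, mem_mk_hub]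
      simp
  right_inv t := by
    rcases t with ⟨⟨B0, B1⟩, h⟩
    have h3 : decide (hub ∈ mk B0 B1 h) = h := by cases h <;> simp [mem_mk_hub]
    simp [blade_mk0, blade_mk1, h3]

lemma card_mk (B0 B1 : Finset (Fin (n-1))) (h : Bool) :
    (mk B0 B1 h).card = B0.card + B1.card + (if h then 1 else 0) := by
  rw [card_eq, blade_mk0, blade_mk1]
  cases h <;> simp [mem_mk_hub]

def cond (α β hA : ℕ) (x y g : ℕ) : Prop :=
  (g + hA = 1 → (x + α) % 2 + (y + β) % 2 = 1) ∧
  (g + hA ≠ 1 → (x + α) % 2 = 0 ∧ (y + β) % 2 = 0)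

def Eset (α β h k : ℕ) : Set ℕ :=
  {m | ∃ x y g, x ≤ k ∧ y ≤ k ∧ g ≤ 1 ∧ cond α β h x y g ∧ m = x + y + g}

lemma feas_symmDiff (S A : Finset (V n)) :
    feas (symmDiff S A) ↔
      cond (blade 0 A).card (blade 1 A).card (if hub ∈ A then 1 else 0)
        (blade 0 S).card (blade 1 S).card (if hub ∈ S then 1 else 0) := by
  have e0 : (blade 0 (symmDiff S A)).card % 2
      = ((blade 0 S).card + (blade 0 A).card) % 2 := by
    rw [blade_symmDiff]; exact card_symmDiff_mod _ _
  have e1 : (blade 1 (symmDiff S A)).card % 2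
      = ((blade 1 S).card + (blade 1 A).card) % 2 := by
    rw [blade_symmDiff]; exact card_symmDiff_mod _ _
  unfold feas cond
  by_cases hS : hub ∈ S <;> by_cases hA' : hub ∈ A
  · rw [if_neg (by simp [Finset.mem_symmDiff, hS, hA']), if_pos hS, if_pos hA']
    constructor
    · rintro ⟨u, v⟩
      exact ⟨fun h' => by omega, fun _ => by omega⟩
    · rintro ⟨-, u⟩
      have := u (by omega)
      omega
  · rw [if_pos (by simp [Finset.mem_symmDiff, hS, hA']), if_pos hS, if_neg hA']
    constructor
    · intro u
      exact ⟨fun _ => by omega, fun h' => by omega⟩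
    · rintro ⟨u, -⟩
      have := u (by omega)
      omega
  · rw [if_pos (by simp [Finset.mem_symmDiff, hS, hA']), if_neg hS, if_pos hA']
    constructor
    · intro u
      exact ⟨fun _ => by omega, fun h' => by omega⟩
    · rintro ⟨u, -⟩
      have := u (by omega)
      omega
  · rw [if_neg (by simp [Finset.mem_symmDiff, hS, hA']), if_neg hS, if_neg hA']
    constructor
    · rintro ⟨u, v⟩
      exact ⟨fun h' => by omega, fun _ => by omega⟩
    · rintro ⟨-, u⟩
      have := u (by omega)
      omega

lemma widthSet (A : Finset (V n)) :
    {m | ∃ S : Finset (V n), (psub (windmill n 2) (symmDiff S A)).det ≠ 0 ∧ S.card = m}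
      = Eset (blade 0 A).card (blade 1 A).card (if hub ∈ A then 1 else 0) (n-1) := by
  ext m
  constructor
  · rintro ⟨S, hf, rfl⟩
    rw [feas_iff, feas_symmDiff] at hf
    exact ⟨(blade 0 S).card, (blade 1 S).card, if hub ∈ S then 1 else 0,
      card_blade_le 0 S, card_blade_le 1 S, by split <;> omega, hf, card_eq S⟩
  · rintro ⟨x, y, g, hx, hy, hg, hc, rfl⟩
    obtain ⟨B0, -, hB0⟩ := Finset.exists_subset_card_eq (s := (Finset.univ : Finset (Fin (n-1)))) (n := x)
      (by rw [Finset.card_univ, Fintype.card_fin]; exact hx)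
    obtain ⟨B1, -, hB1⟩ := Finset.exists_subset_card_eq (s := (Finset.univ : Finset (Fin (n-1)))) (n := y)
      (by rw [Finset.card_univ, Fintype.card_fin]; exact hy)
    refine ⟨mk B0 B1 (g = 1), ?_, ?_⟩
    · rw [feas_iff, feas_symmDiff, blade_mk0, blade_mk1, hB0, hB1]
      have hgg : (if hub ∈ mk B0 B1 (decide (g = 1)) then 1 else 0) = g := by
        by_cases hg1 : g = 1
        · subst hg1; simp [mem_mk_hub]
        · have hg0 : g = 0 := by omega
          subst hg0; simp [mem_mk_hub]
      rw [hgg]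
      exact hc
    · rw [card_mk, hB0, hB1]
      have : (if (decide (g = 1)) = true then 1 else 0) = g := by
        interval_cases g <;> simp
      simp only [this]

lemma sysWidth_helper {X : Set ℕ} {M L : ℕ} (hM : IsGreatest X M) (hL : IsLeast X L) :
    sSup X - sInf X = M - L := by
  rw [hM.csSup_eq, hL.csInf_eq]

lemma Eset_width (k a b h : ℕ) (hk : 1 ≤ k) (hhle : h ≤ 1) :
    sSup (Eset a b h k) - sInf (Eset a b h k) =
      if (a + h * k) % 2 = 1 ∧ (b + h * k) % 2 = 1 then 2 * k - 2 else 2 * k := by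
  set M0 := (k - (k + a) % 2) + (k - (k + b) % 2) + h with hM0
  set M1 := (2 * k - (1 + a + b) % 2) + (1 - h) with hM1
  set L0 := a % 2 + b % 2 + h with hL0
  set L1 := (1 + a + b) % 2 + (1 - h) with hL1
  have m0 : M0 ∈ Eset a b h k :=
    ⟨k - (k + a) % 2, k - (k + b) % 2, h, by omega, by omega, hhle,
      ⟨fun h' => by omega, fun h' => by constructor <;> omega⟩, rfl⟩
  have m1 : M1 ∈ Eset a b h k :=
    ⟨k, k - (1 + a + b) % 2, 1 - h, le_refl k, by omega, by omega,
      ⟨fun _ => by omega, fun h' => by omega⟩, by omega⟩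
  have l0 : L0 ∈ Eset a b h k :=
    ⟨a % 2, b % 2, h, by omega, by omega, hhle,
      ⟨fun h' => by omega, fun h' => by constructor <;> omega⟩, rfl⟩
  have l1 : L1 ∈ Eset a b h k :=
    ⟨(1 + a + b) % 2, 0, 1 - h, by omega, by omega, by omega,
      ⟨fun _ => by omega, fun h' => by omega⟩, by omega⟩
  have hM : IsGreatest (Eset a b h k) (max M0 M1) := by
    constructor
    · rcases max_choice M0 M1 with hmx | hmx <;> rw [hmx]
      · exact m0
      · exact m1
    · rintro m ⟨x, y, g, hx, hy, hg, ⟨hc1, hc2⟩, rfl⟩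
      by_cases hcase : g + h = 1
      · have := hc1 hcase
        exact le_max_of_le_right (by omega)
      · have := hc2 hcase
        exact le_max_of_le_left (by omega)
  have hL : IsLeast (Eset a b h k) (min L0 L1) := by
    constructor
    · rcases min_choice L0 L1 with hmn | hmn <;> rw [hmn]
      · exact l0
      · exact l1
    · rintro m ⟨x, y, g, hx, hy, hg, ⟨hc1, hc2⟩, rfl⟩
      by_cases hcase : g + h = 1
      · have := hc1 hcase
        exact min_le_of_right_le (by omega)
      · have := hc2 hcase
        exact min_le_of_left_le (by omega)
  rw [sysWidth_helper hM hL]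
  clear m0 m1 l0 l1 hM hL
  have hor : h = 0 ∨ h = 1 := by omega
  rcases hor with rfl | rfl
  · rw [zero_mul]
    split_ifs with hbad <;> omega
  · rw [one_mul]
    split_ifs with hbad <;> omega

lemma twistWidth_eq (hn : 2 ≤ n) (A : Finset (V n)) :
    twistWidth (windmill n 2) A =
      if ((blade 0 A).card + (if hub ∈ A then n - 1 else 0)) % 2 = 1 ∧
         ((blade 1 A).card + (if hub ∈ A then n - 1 else 0)) % 2 = 1
      then 2 * (n - 1) - 2 else 2 * (n - 1) := by
  have hk : 1 ≤ n - 1 := by omega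
  have hE : twistWidth (windmill n 2) A =
      sSup (Eset (blade 0 A).card (blade 1 A).card (if hub ∈ A then 1 else 0) (n-1))
        - sInf (Eset (blade 0 A).card (blade 1 A).card (if hub ∈ A then 1 else 0) (n-1)) := by
    rw [twistWidth, sysWidth, ← widthSet A]
  rw [hE, Eset_width _ _ _ _ hk (by split <;> omega)]
  by_cases hhubA : hub ∈ A
  · simp only [if_pos hhubA, one_mul]
  · simp only [if_neg hhubA, zero_mul]

lemma count_parity (hn : 2 ≤ n) (r : ℕ) :
    ((Finset.univ : Finset (Finset (Fin (n-1)))).filter fun B => (B.card + r) % 2 = 1).card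
      = 2 ^ (n - 2) := by
  have hk : 1 ≤ n - 1 := by omega
  set x0 : Fin (n - 1) := ⟨0, hk⟩ with hx0
  have hflip : ∀ B : Finset (Fin (n-1)), ((symmDiff B {x0}).card + B.card) % 2 = 1 := by
    intro B
    by_cases hx : x0 ∈ B
    · have he : symmDiff B {x0} = B.erase x0 := by
        ext v
        simp only [Finset.mem_symmDiff, Finset.mem_singleton, Finset.mem_erase]
        constructor
        · rintro (⟨hv, hne⟩ | ⟨rfl, hv⟩)
          · exact ⟨hne, hv⟩
          · exact absurd hx hv
        · rintro ⟨hne, hv⟩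
          exact Or.inl ⟨hv, hne⟩
      have hpos : 1 ≤ B.card := Finset.card_pos.mpr ⟨x0, hx⟩
      rw [he, Finset.card_erase_of_mem hx]
      omega
    · have he : symmDiff B {x0} = insert x0 B := by
        ext v
        simp only [Finset.mem_symmDiff, Finset.mem_singleton, Finset.mem_insert]
        constructor
        · rintro (⟨hv, hne⟩ | ⟨rfl, -⟩)
          · exact Or.inr hv
          · exact Or.inl rfl
        · rintro (rfl | hv)
          · exact Or.inr ⟨rfl, hx⟩
          · exact Or.inl ⟨hv, fun hh => hx (hh ▸ hv)⟩
      rw [he, Finset.card_insert_of_notMem hx]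
      omega
  have hbij : ((Finset.univ : Finset (Finset (Fin (n-1)))).filter
        fun B => (B.card + r) % 2 = 1).card
      = ((Finset.univ : Finset (Finset (Fin (n-1)))).filter
        fun B => ¬ ((B.card + r) % 2 = 1)).card := by
    refine Finset.card_bij' (fun B _ => symmDiff B {x0}) (fun B _ => symmDiff B {x0})
      ?_ ?_ ?_ ?_
    · intro B hB
      rw [Finset.mem_filter] at hB ⊢
      have := hflip B
      refine ⟨Finset.mem_univ _, ?_⟩
      show ¬ ((symmDiff B {x0}).card + r) % 2 = 1
      omega
    · intro B hB
      rw [Finset.mem_filter] at hB ⊢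
      have := hflip B
      refine ⟨Finset.mem_univ _, ?_⟩
      show ((symmDiff B {x0}).card + r) % 2 = 1
      omega
    · intro B _
      show symmDiff (symmDiff B {x0}) {x0} = B
      exact symmDiff_symmDiff_cancel_right {x0} B
    · intro B _
      show symmDiff (symmDiff B {x0}) {x0} = B
      exact symmDiff_symmDiff_cancel_right {x0} B
  have htotal := Finset.card_filter_add_card_filter_not
    (s := (Finset.univ : Finset (Finset (Fin (n-1))))) (fun B => (B.card + r) % 2 = 1)
  have hcard : (Finset.univ : Finset (Finset (Fin (n-1)))).card = 2 ^ (n - 1) := by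
    rw [Finset.card_univ, Fintype.card_finset, Fintype.card_fin]
  have hpow : (2:ℕ) ^ (n - 1) = 2 ^ (n - 2) * 2 := by
    rw [← pow_succ]
    congr 1
    omega
  omega

def badT (t : (Finset (Fin (n-1)) × Finset (Fin (n-1))) × Bool) : Prop :=
  (t.1.1.card + (if t.2 = true then n-1 else 0)) % 2 = 1 ∧
  (t.1.2.card + (if t.2 = true then n-1 else 0)) % 2 = 1

instance : DecidablePred (badT (n := n)) := fun _ => instDecidableAnd

lemma count_badT (hn : 2 ≤ n) :
    (Finset.univ.filter (badT (n := n))).card = 2 ^ (2*n - 3) := by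
  rw [Finset.card_filter, Fintype.sum_prod_type]
  have hbool : ∀ q : Finset (Fin (n-1)) × Finset (Fin (n-1)),
      (∑ b : Bool, if badT (q, b) then 1 else 0)
        = (if ((q.1.card + (n-1)) % 2 = 1 ∧ (q.2.card + (n-1)) % 2 = 1) then 1 else 0)
          + (if ((q.1.card + 0) % 2 = 1 ∧ (q.2.card + 0) % 2 = 1) then 1 else 0) := by
    intro q
    have e1 : badT (q, true) ↔ ((q.1.card + (n-1)) % 2 = 1 ∧ (q.2.card + (n-1)) % 2 = 1) := by
      unfold badT
      simp
    have e2 : badT (q, false) ↔ ((q.1.card + 0) % 2 = 1 ∧ (q.2.card + 0) % 2 = 1) := by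
      unfold badT
      simp
    rw [Fintype.sum_bool, if_congr e1 rfl rfl, if_congr e2 rfl rfl]
  rw [Finset.sum_congr rfl fun q _ => hbool q, Finset.sum_add_distrib]
  have key : ∀ r : ℕ,
      (∑ q : Finset (Fin (n-1)) × Finset (Fin (n-1)),
        if ((q.1.card + r) % 2 = 1 ∧ (q.2.card + r) % 2 = 1) then 1 else 0)
      = 2 ^ (n-2) * 2 ^ (n-2) := by
    intro r
    rw [Fintype.sum_prod_type]
    have hsplit : ∀ B0 B1 : Finset (Fin (n-1)),
        (if ((B0.card + r) % 2 = 1 ∧ (B1.card + r) % 2 = 1) then (1:ℕ) else 0)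
          = (if (B0.card + r) % 2 = 1 then 1 else 0) * (if (B1.card + r) % 2 = 1 then 1 else 0) := by
      intro B0 B1
      by_cases h0 : (B0.card + r) % 2 = 1 <;> by_cases h1 : (B1.card + r) % 2 = 1 <;>
        simp [h0, h1]
    calc (∑ B0 : Finset (Fin (n-1)), ∑ B1 : Finset (Fin (n-1)),
          if ((B0.card + r) % 2 = 1 ∧ (B1.card + r) % 2 = 1) then (1:ℕ) else 0)
        = (∑ B0 : Finset (Fin (n-1)), if (B0.card + r) % 2 = 1 then (1:ℕ) else 0)
          * (∑ B1 : Finset (Fin (n-1)), if (B1.card + r) % 2 = 1 then (1:ℕ) else 0) := by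
          rw [Finset.sum_mul_sum]
          exact Finset.sum_congr rfl fun B0 _ => Finset.sum_congr rfl fun B1 _ => hsplit B0 B1
      _ = 2 ^ (n-2) * 2 ^ (n-2) := by
          rw [← Finset.card_filter, count_parity hn r]
  rw [key (n-1), key 0]
  have : (2:ℕ) ^ (n-2) * 2 ^ (n-2) = 2 ^ (2*n - 4) := by
    rw [← pow_add]
    congr 1
    omega
  rw [this]
  have : (2:ℕ) ^ (2*n-4) + 2 ^ (2*n-4) = 2 ^ (2*n-3) := by
    have h2 : (2:ℕ) ^ (2*n-3) = 2 ^ (2*n-4) * 2 := by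
      rw [← pow_succ]
      congr 1
      omega
    omega
  rw [this]

theorem twistPoly_join_complete' (hn : 2 ≤ n) :
    twistPoly (windmill n 2)
      = 2 ^ (2 * n - 3) * X ^ (2 * n - 4) * (3 * X ^ 2 + 1) := by
  have hk : 1 ≤ n - 1 := by omega
  rw [twistPoly]
  have step1 : ∀ A : Finset (V n), (X : Polynomial ℤ) ^ twistWidth (windmill n 2) A
      = if badT (statEquiv A) then (X : Polynomial ℤ) ^ (2*(n-1)-2)
        else (X : Polynomial ℤ) ^ (2*(n-1)) := by
    intro A
    rw [twistWidth_eq hn A, apply_ite (fun e => (X : Polynomial ℤ) ^ e)]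
    refine if_congr ?_ rfl rfl
    unfold badT
    by_cases hhA : hub ∈ A <;> simp [statEquiv, hhA]
  rw [Finset.sum_congr rfl fun A _ => step1 A]
  rw [Equiv.sum_comp statEquiv
    (fun t => if badT t then (X : Polynomial ℤ) ^ (2*(n-1)-2) else (X : Polynomial ℤ) ^ (2*(n-1)))]
  rw [Finset.sum_ite, Finset.sum_const, Finset.sum_const]
  have htot : (Finset.univ :
      Finset ((Finset (Fin (n-1)) × Finset (Fin (n-1))) × Bool)).card = 2 ^ (2*n - 1) := by
    rw [Finset.card_univ, Fintype.card_prod, Fintype.card_prod, Fintype.card_finset,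
      Fintype.card_bool, Fintype.card_fin]
    rw [← pow_add]
    have : (2:ℕ) ^ ((n-1) + (n-1)) * 2 = 2 ^ ((n-1)+(n-1)+1) := by rw [pow_succ]
    rw [this]
    congr 1
    omega
  have hneg := Finset.card_filter_add_card_filter_not
    (s := (Finset.univ : Finset ((Finset (Fin (n-1)) × Finset (Fin (n-1))) × Bool)))
    (badT (n := n))
  have hbadc := count_badT hn
  have hp4 : (2:ℕ) ^ (2*n-1) = 4 * 2 ^ (2*n-3) := by
    rw [show 2*n-1 = (2*n-3)+2 by omega, pow_add]
    ring
  have hgood : (Finset.univ.filter fun t => ¬ badT (n := n) t).card = 3 * 2 ^ (2*n-3) := by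
    omega
  rw [hbadc, hgood]
  rw [nsmul_eq_mul, nsmul_eq_mul]
  push_cast
  rw [show 2*(n-1)-2 = 2*n-4 by omega, show 2*(n-1) = (2*n-4)+2 by omega]
  ring


end WM

theorem twistPoly_join_complete (n : ℕ) (hn : 2 ≤ n) :
    twistPoly (windmill n 2)
      = 2 ^ (2 * n - 3) * X ^ (2 * n - 4) * (3 * X ^ 2 + 1) :=
  WM.twistPoly_join_complete' hn
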